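/- arXiv:2007.10483 — 8 statements merged into one kernel-verified Lean document; each statement's English description precedes it below -/
import Mathlib

section
/- Let d ≥ 2 and let {E_x}_{x=1}^{d²} be a semi-SIC POVM with parameter b on ℂ^d. Then for every index x, the real number a_x := Tr[E_x] satisfies the quadratic equation a_x² − a_x + (d²−1)·b = 0; equivalently, Tr[E_x] ∈ {a₊, a₋} where a₊ = (1 + √(1 − 4b(d²−1)))/2 and a₋ = (1 − √(1 − 4b(d²−1)))/2. -/
open Matrix
open scoped ComplexOrder

noncomputable section

lemma trace_conj_diag {d : ℕ} (U : Matrix.unitaryGroup (Fin d) ℂ) (f : Fin d → ℂ) :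
    ((U : Matrix (Fin d) (Fin d) ℂ) * diagonal f * star (U : Matrix (Fin d) (Fin d) ℂ)).trace
      = ∑ i, f i := by
  rw [trace_mul_cycle, (Matrix.mem_unitaryGroup_iff').mp U.2, one_mul, trace_diagonal]

lemma trace_sq_eig {d : ℕ} (A : Matrix (Fin d) (Fin d) ℂ) (hA : A.IsHermitian) :
    (A * A).trace = ∑ i, (hA.eigenvalues i : ℂ) ^ 2 := by
  conv_lhs => rw [hA.spectral_theorem, Unitary.conjStarAlgAut_apply]
  have hU := (Matrix.mem_unitaryGroup_iff').mp (hA.eigenvectorUnitary).2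
  have : ((hA.eigenvectorUnitary : Matrix (Fin d) (Fin d) ℂ) *
      diagonal (RCLike.ofReal ∘ hA.eigenvalues) * star (hA.eigenvectorUnitary : Matrix (Fin d) (Fin d) ℂ)) *
      ((hA.eigenvectorUnitary : Matrix (Fin d) (Fin d) ℂ) *
      diagonal (RCLike.ofReal ∘ hA.eigenvalues) * star (hA.eigenvectorUnitary : Matrix (Fin d) (Fin d) ℂ))
      = (hA.eigenvectorUnitary : Matrix (Fin d) (Fin d) ℂ) *
        (diagonal (RCLike.ofReal ∘ hA.eigenvalues) * diagonal (RCLike.ofReal ∘ hA.eigenvalues)) *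
        star (hA.eigenvectorUnitary : Matrix (Fin d) (Fin d) ℂ) := by
    simp only [mul_assoc]
    rw [← mul_assoc (star (hA.eigenvectorUnitary : Matrix (Fin d) (Fin d) ℂ)), hU, one_mul,
      ← mul_assoc (diagonal (RCLike.ofReal ∘ hA.eigenvalues))]
  rw [this, diagonal_mul_diagonal, trace_conj_diag]
  simp [pow_two]

lemma trace_eig {d : ℕ} (A : Matrix (Fin d) (Fin d) ℂ) (hA : A.IsHermitian) :
    A.trace = ∑ i, (hA.eigenvalues i : ℂ) := by
  conv_lhs => rw [hA.spectral_theorem, Unitary.conjStarAlgAut_apply]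
  rw [trace_conj_diag]
  simp

lemma trace_sq_of_rank_one {d : ℕ} (A : Matrix (Fin d) (Fin d) ℂ) (hA : A.PosSemidef)
    (hr : A.rank = 1) : (A * A).trace = A.trace ^ 2 := by
  have h1 := hA.1.rank_eq_card_non_zero_eigs
  rw [hr] at h1
  obtain ⟨i0, hi0⟩ := Fintype.card_eq_one_iff.mp h1.symm
  have hz : ∀ j, j ≠ i0.1 → hA.1.eigenvalues j = 0 := by
    intro j hj
    by_contra h
    exact hj (congrArg Subtype.val (hi0 ⟨j, h⟩))
  rw [trace_sq_eig A hA.1, trace_eig A hA.1,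
    Finset.sum_eq_single i0.1 (by intro j _ hj; simp [hz j hj])
      (by simp),
    Finset.sum_eq_single i0.1 (by intro j _ hj; simp [hz j hj]) (by simp)]

/-- A semi-SIC POVM with parameter `b` on `ℂ^d`: a family of `d²` positive semidefinite
rank-one matrices summing to the identity, spanning the real vector space of Hermitian
matrices, and with constant pairwise Hilbert-Schmidt inner product `b`. -/
def IsSemiSIC (d : ℕ) (b : ℝ) (E : Fin (d ^ 2) → Matrix (Fin d) (Fin d) ℂ) : Prop :=
  (∀ x, (E x).PosSemidef) ∧
  (∀ x, (E x).rank = 1) ∧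
  (∑ x, E x = 1) ∧
  (∀ A : Matrix (Fin d) (Fin d) ℂ, A.IsHermitian → A ∈ Submodule.span ℝ (Set.range E)) ∧
  (∀ x y, x ≠ y → (E x * E y).trace = (b : ℂ))

theorem trace_quadratic_of_isSemiSIC (d : ℕ) (hd : 2 ≤ d) (b : ℝ)
    (E : Fin (d ^ 2) → Matrix (Fin d) (Fin d) ℂ) (hE : IsSemiSIC d b E) (x : Fin (d ^ 2)) :
    ∃ a : ℝ, (E x).trace = (a : ℂ) ∧
      a ^ 2 - a + ((d : ℝ) ^ 2 - 1) * b = 0 ∧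
      (a = (1 + Real.sqrt (1 - 4 * b * ((d : ℝ) ^ 2 - 1))) / 2 ∨
       a = (1 - Real.sqrt (1 - 4 * b * ((d : ℝ) ^ 2 - 1))) / 2) := by
  obtain ⟨hpsd, hrank, hsum, -, hpair⟩ := hE
  set a : ℝ := ∑ i, (hpsd x).1.eigenvalues i with ha
  have htr : (E x).trace = (a : ℂ) := by
    rw [trace_eig (E x) (hpsd x).1, ha]
    push_cast
    rfl
  have hq : a ^ 2 - a + ((d : ℝ) ^ 2 - 1) * b = 0 := by
    have key : (E x).trace = ∑ y, (E x * E y).trace := by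
      conv_lhs => rw [← mul_one (E x), ← hsum, Finset.mul_sum, trace_sum]
    rw [← Finset.add_sum_erase _ _ (Finset.mem_univ x)] at key
    have hcard : (Finset.univ.erase x).card = d ^ 2 - 1 := by
      rw [Finset.card_erase_of_mem (Finset.mem_univ x)]
      simp
    have hrest : ∑ y ∈ Finset.univ.erase x, (E x * E y).trace
        = ((d ^ 2 - 1 : ℕ) : ℂ) * (b : ℂ) := by
      rw [Finset.sum_congr rfl (fun y hy => hpair x y (Finset.ne_of_mem_erase hy).symm),
        Finset.sum_const, hcard, nsmul_eq_mul]
    rw [hrest, trace_sq_of_rank_one (E x) (hpsd x) (hrank x), htr] at key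
    have h1 : (1 : ℕ) ≤ d ^ 2 := by nlinarith
    have keyR : a = a ^ 2 + ((d : ℝ) ^ 2 - 1) * b := by
      have := key
      rw [show ((d ^ 2 - 1 : ℕ) : ℂ) = (((d : ℝ) ^ 2 - 1 : ℝ) : ℂ) by push_cast [Nat.cast_sub h1]; ring] at this
      exact_mod_cast this
    linarith
  refine ⟨a, htr, hq, ?_⟩
  have hdisc : (2 * a - 1) ^ 2 = 1 - 4 * b * ((d : ℝ) ^ 2 - 1) := by nlinarith [hq]
  rcases le_total (2 * a - 1) 0 with h | h
  · right; rw [← hdisc, Real.sqrt_sq_eq_abs, abs_of_nonpos h]; ring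
  · left; rw [← hdisc, Real.sqrt_sq_eq_abs, abs_of_nonneg h]; ring
end
end

section
/- Let d ≥ 2 and let {E_x}_{x=1}^{d²} be a semi-SIC POVM with parameter b on ℂ^d. Then b ≤ 1/(4(d²−1)). -/
open Matrix
open scoped ComplexOrder

noncomputable section

section Aux

variable {n : Type*} [Fintype n] [DecidableEq n]

/-- The trace of a Hermitian matrix is the sum of its eigenvalues. -/
lemma trace_eq_sum_eig' {A : Matrix n n ℂ} (hA : A.IsHermitian) :
    A.trace = ∑ i, (hA.eigenvalues i : ℂ) := by
  conv_lhs => rw [hA.spectral_theorem, Unitary.conjStarAlgAut_apply]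
  rw [Matrix.trace_mul_cycle,
    (Matrix.mem_unitaryGroup_iff').mp (Matrix.IsHermitian.eigenvectorUnitary hA).2, Matrix.one_mul,
    Matrix.trace_diagonal]
  rfl

/-- The trace of the square of a Hermitian matrix is the sum of the squares of its
eigenvalues. -/
lemma trace_sq_eq_sum_eig' {A : Matrix n n ℂ} (hA : A.IsHermitian) :
    (A * A).trace = ∑ i, ((hA.eigenvalues i : ℂ)) ^ 2 := by
  set U : Matrix n n ℂ := (Matrix.IsHermitian.eigenvectorUnitary hA : Matrix n n ℂ) with hUdef
  set D : Matrix n n ℂ := Matrix.diagonal (RCLike.ofReal ∘ hA.eigenvalues) with hDdef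
  have hU : star U * U = 1 :=
    (Matrix.mem_unitaryGroup_iff').mp (Matrix.IsHermitian.eigenvectorUnitary hA).2
  have key : A * A = U * (D * D) * star U := by
    conv_lhs => rw [hA.spectral_theorem, Unitary.conjStarAlgAut_apply]
    simp only [Matrix.mul_assoc, ← hUdef, ← hDdef]
    rw [← Matrix.mul_assoc (star U) U, hU, Matrix.one_mul]
  rw [key, Matrix.trace_mul_cycle, ← Matrix.mul_assoc, hU, Matrix.one_mul, hDdef,
    Matrix.diagonal_mul_diagonal, Matrix.trace_diagonal]
  simp [sq]

/-- For a rank-one Hermitian matrix, the sum of squares of eigenvalues equals the square of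
the sum of eigenvalues (there is exactly one nonzero eigenvalue). -/
lemma sum_sq_of_rank_one' {A : Matrix n n ℂ} (hA : A.IsHermitian) (hr : A.rank = 1) :
    ∑ i, (hA.eigenvalues i) ^ 2 = (∑ i, hA.eigenvalues i) ^ 2 := by
  have hcard : Fintype.card {i // hA.eigenvalues i ≠ 0} = 1 := by
    rw [← hA.rank_eq_card_non_zero_eigs, hr]
  obtain ⟨⟨i₀, hi₀⟩, huniq⟩ := Fintype.card_eq_one_iff.mp hcard
  have hz : ∀ j, j ≠ i₀ → hA.eigenvalues j = 0 := by
    intro j hj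
    by_contra h
    exact hj (congrArg Subtype.val (huniq ⟨j, h⟩))
  rw [Finset.sum_eq_single i₀ (fun j _ hj => by rw [hz j hj]; ring)
      (fun h => absurd (Finset.mem_univ i₀) h),
    Finset.sum_eq_single i₀ (fun j _ hj => hz j hj)
      (fun h => absurd (Finset.mem_univ i₀) h)]

end Aux

theorem b_le_of_isSemiSIC (d : ℕ) (hd : 2 ≤ d) (b : ℝ)
    (E : Fin (d ^ 2) → Matrix (Fin d) (Fin d) ℂ) (hE : IsSemiSIC d b E) :
    b ≤ 1 / (4 * ((d : ℝ) ^ 2 - 1)) := by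
  obtain ⟨hpsd, hrank, hsum, -, hb⟩ := hE
  set t : Fin (d ^ 2) → ℝ := fun x => ∑ i, ((hpsd x).1.eigenvalues i) with ht
  have htr : ∀ x, (E x).trace = (t x : ℂ) := by
    intro x; rw [trace_eq_sum_eig' (hpsd x).1]; push_cast [ht]; ring
  have htr2 : ∀ x, (E x * E x).trace = ((t x) ^ 2 : ℝ) := by
    intro x
    rw [trace_sq_eq_sum_eig' (hpsd x).1, ht]
    push_cast [← sum_sq_of_rank_one' (hpsd x).1 (hrank x)]
    ring
  obtain ⟨k, hk⟩ : ∃ k, d ^ 2 = k + 1 :=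
    ⟨d ^ 2 - 1, by have := Nat.one_le_pow 2 d (by omega); omega⟩
  have hkr : ((d : ℝ)) ^ 2 = (k : ℝ) + 1 := by exact_mod_cast hk
  -- sum of traces = d
  have h1 : ∑ x, t x = d := by
    have h : (∑ x, (t x : ℂ)) = (d : ℂ) := by
      simp_rw [← htr, ← Matrix.trace_sum, hsum, Matrix.trace_one]
      norm_num
    exact_mod_cast h
  -- sum of pairwise traces
  have h2 : (∑ x, (t x) ^ 2) + ((d ^ 2 * k : ℕ) : ℝ) * b = d := by
    have key : (∑ x, ∑ y, (E x * E y).trace) = (d : ℂ) := by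
      have hrw : ∑ x, ∑ y, (E x * E y).trace = ((∑ x, E x) * (∑ y, E y)).trace := by
        rw [Matrix.sum_mul]
        simp_rw [Matrix.mul_sum, Matrix.trace_sum]
      rw [hrw, hsum, Matrix.one_mul, Matrix.trace_one]
      simp
    have expand : (∑ x, ∑ y, (E x * E y).trace)
        = (∑ x, ((t x) ^ 2 : ℂ)) + ((d ^ 2 * k : ℕ) : ℂ) * b := by
      have hrow : ∀ x : Fin (d ^ 2), ∑ y, (E x * E y).trace
          = ((t x) ^ 2 : ℂ) + (k : ℕ) * (b : ℂ) := by
        intro x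
        rw [← Finset.add_sum_erase _ _ (Finset.mem_univ x), htr2 x]
        push_cast
        congr 1
        rw [Finset.sum_congr rfl fun y hy => hb x y (Ne.symm (Finset.ne_of_mem_erase hy)),
          Finset.sum_const, Finset.card_erase_of_mem (Finset.mem_univ _), Finset.card_univ,
          Fintype.card_fin, hk, Nat.add_sub_cancel, nsmul_eq_mul]
      simp_rw [hrow, Finset.sum_add_distrib, Finset.sum_const, Finset.card_univ, Fintype.card_fin,
        nsmul_eq_mul]
      push_cast
      ring
    rw [key] at expand
    have h : ((∑ x, (t x) ^ 2 + ((d ^ 2 * k : ℕ) : ℝ) * b : ℝ) : ℂ) = ((d : ℝ) : ℂ) := by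
      push_cast
      push_cast at expand
      linear_combination -expand
    exact_mod_cast h
  -- Cauchy–Schwarz
  have hcs : (∑ x, t x) ^ 2 ≤ ((d ^ 2 : ℕ) : ℝ) * ∑ x, (t x) ^ 2 := by
    simpa [Finset.card_univ] using sq_sum_le_card_mul_sum_sq (s := Finset.univ) (f := t)
  rw [h1] at hcs
  have hdr : (2 : ℝ) ≤ (d : ℝ) := by exact_mod_cast hd
  have hd2 : (0 : ℝ) < (d : ℝ) ^ 2 := by positivity
  have hone : 1 ≤ ∑ x, (t x) ^ 2 := by
    have hcast : ((d ^ 2 : ℕ) : ℝ) = (d : ℝ) ^ 2 := by push_cast; ring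
    rw [hcast] at hcs
    nlinarith
  have hM : ((d ^ 2 * k : ℕ) : ℝ) = (d : ℝ) ^ 2 * ((d : ℝ) ^ 2 - 1) := by
    push_cast; rw [hkr]; ring
  rw [hM] at h2
  have h3 : (d : ℝ) ^ 2 * ((d : ℝ) ^ 2 - 1) * b ≤ (d : ℝ) - 1 := by nlinarith
  rw [le_div_iff₀ (by nlinarith : (0 : ℝ) < 4 * ((d : ℝ) ^ 2 - 1))]
  nlinarith [sq_nonneg ((d : ℝ) - 2), sq_nonneg ((d : ℝ) ^ 2 - 1)]
end
end

section
/- Let d ≥ 2, let {E_x}_{x=1}^{d²} be a semi-SIC POVM with parameter b on ℂ^d, let a₋ = (1 − √(1 − 4b(d²−1)))/2, and let k denote the number of indices x with Tr[E_x] = a₋. If a₋ ≠ (1 + √(1 − 4b(d²−1)))/2, then d² − 2d = (2k − d²)·√(1 − 4b(d²−1)). -/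
open Matrix
open scoped ComplexOrder

noncomputable section

private lemma sum_sq_eq_sq_sum_aux {ι : Type*} [Fintype ι] (f : ι → ℝ)
    (h : Fintype.card {i // f i ≠ 0} = 1) : (∑ i, f i) ^ 2 = ∑ i, (f i) ^ 2 := by
  obtain ⟨⟨i0, hi0⟩, huniq⟩ := Fintype.card_eq_one_iff.mp h
  have hz : ∀ j, j ≠ i0 → f j = 0 := by
    intro j hj
    by_contra hfj
    exact hj (congrArg Subtype.val (huniq ⟨j, hfj⟩))
  have h1 : ∑ i, f i = f i0 :=
    Finset.sum_eq_single_of_mem i0 (Finset.mem_univ _) (fun j _ hj => hz j hj)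
  have h2 : ∑ i, (f i) ^ 2 = (f i0) ^ 2 :=
    Finset.sum_eq_single_of_mem i0 (Finset.mem_univ _) (fun j _ hj => by rw [hz j hj]; ring)
  rw [h1, h2]

private lemma trace_sq_lemma {n : Type*} [Fintype n] [DecidableEq n] {A : Matrix n n ℂ}
    (hA : A.IsHermitian) (hr : A.rank = 1) : (A * A).trace = A.trace ^ 2 := by
  have hsu : star (hA.eigenvectorUnitary : Matrix n n ℂ) * (hA.eigenvectorUnitary : Matrix n n ℂ)
      = 1 := Unitary.coe_star_mul_self _
  have htr : A.trace = ((∑ i, hA.eigenvalues i : ℝ) : ℂ) := by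
    conv_lhs => rw [hA.spectral_theorem, Unitary.conjStarAlgAut_apply]
    rw [Matrix.trace_mul_cycle, hsu, one_mul, trace_diagonal]
    push_cast
    rfl
  have key : ∀ U D : Matrix n n ℂ, star U * U = 1 →
      (U * D * star U) * (U * D * star U) = U * (D * D) * star U := by
    intro U D h
    calc (U * D * star U) * (U * D * star U)
        = U * (D * ((star U * U) * (D * star U))) := by simp only [mul_assoc]
      _ = U * (D * D) * star U := by rw [h, one_mul]; simp only [mul_assoc]
  have htr2 : (A * A).trace = ((∑ i, (hA.eigenvalues i) ^ 2 : ℝ) : ℂ) := by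
    conv_lhs => rw [hA.spectral_theorem, Unitary.conjStarAlgAut_apply, key _ _ hsu]
    rw [Matrix.trace_mul_cycle, hsu, one_mul, diagonal_mul_diagonal, trace_diagonal]
    push_cast
    ring_nf
    rfl
  have hcard : Fintype.card {i // hA.eigenvalues i ≠ 0} = 1 := by
    rw [← hA.rank_eq_card_non_zero_eigs, hr]
  rw [htr, htr2, ← sum_sq_eq_sq_sum_aux _ hcard]
  push_cast
  ring

theorem key_identity_of_isSemiSIC (d : ℕ) (hd : 2 ≤ d) (b : ℝ)
    (E : Fin (d ^ 2) → Matrix (Fin d) (Fin d) ℂ) (hE : IsSemiSIC d b E)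
    (aM : ℝ)
    (haM : aM = (1 - Real.sqrt (1 - 4 * b * ((d : ℝ) ^ 2 - 1))) / 2)
    (k : ℕ)
    (hk : k = (Finset.univ.filter fun x => (E x).trace = (aM : ℂ)).card)
    (hne : aM ≠ (1 + Real.sqrt (1 - 4 * b * ((d : ℝ) ^ 2 - 1))) / 2) :
    (d : ℝ) ^ 2 - 2 * (d : ℝ) =
      (2 * (k : ℝ) - (d : ℝ) ^ 2) * Real.sqrt (1 - 4 * b * ((d : ℝ) ^ 2 - 1)) := by
  classical
  obtain ⟨hpsd, hrank, hsum, -, hb⟩ := hE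
  set s : ℝ := Real.sqrt (1 - 4 * b * ((d : ℝ) ^ 2 - 1)) with hs_def
  have hs : s ≠ 0 := by
    intro h
    apply hne
    rw [haM, h]
    norm_num
  have harg : 0 ≤ 1 - 4 * b * ((d : ℝ) ^ 2 - 1) := by
    by_contra h
    exact hs (Real.sqrt_eq_zero_of_nonpos (le_of_not_ge h))
  have hssq : s ^ 2 = 1 - 4 * b * ((d : ℝ) ^ 2 - 1) := Real.sq_sqrt harg
  -- real traces
  set t : Fin (d ^ 2) → ℝ := fun x => ((E x).trace).re with ht_def
  have htr : ∀ x, (E x).trace = ((t x : ℝ) : ℂ) := by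
    intro x
    have hH : (E x).IsHermitian := (hpsd x).isHermitian
    have hst : (starRingEnd ℂ) ((E x).trace) = (E x).trace := by
      show star (E x).trace = (E x).trace
      rw [← Matrix.trace_conjTranspose, hH.eq]
    exact ((Complex.conj_eq_iff_re.mp hst)).symm
  -- quadratic equation for each trace
  have hquad : ∀ x, t x ^ 2 - t x + b * ((d : ℝ) ^ 2 - 1) = 0 := by
    intro x
    have h1 : (E x * ∑ y, E y).trace = (E x).trace := by rw [hsum, mul_one]
    rw [Finset.mul_sum, Matrix.trace_sum] at h1
    rw [← Finset.add_sum_erase _ _ (Finset.mem_univ x)] at h1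
    have h2 : ∑ y ∈ Finset.univ.erase x, (E x * E y).trace
        = (((d : ℝ) ^ 2 - 1) * b : ℝ) := by
      rw [Finset.sum_congr rfl (fun y hy => hb x y (Ne.symm (Finset.ne_of_mem_erase hy)))]
      rw [Finset.sum_const, Finset.card_erase_of_mem (Finset.mem_univ x)]
      simp only [Finset.card_univ, Fintype.card_fin, nsmul_eq_mul]
      push_cast [Nat.one_le_iff_ne_zero.mpr (by positivity : d ^ 2 ≠ 0)]
      ring
    rw [h2, trace_sq_lemma (hpsd x).isHermitian (hrank x), htr x] at h1
    have h4 : t x ^ 2 + ((d : ℝ) ^ 2 - 1) * b = t x := by exact_mod_cast h1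
    linarith
  -- each trace is aM or aP
  set aP : ℝ := (1 + s) / 2 with haP
  have hroots : ∀ x, t x = aM ∨ t x = aP := by
    intro x
    have hfac : (2 * t x - 1 - s) * (2 * t x - 1 + s) = 0 := by
      nlinarith [hssq, hquad x]
    rcases mul_eq_zero.mp hfac with h | h
    · right; rw [haP]; linarith
    · left; rw [haM]; linarith
  -- total trace is d
  have htot : ∑ x, t x = (d : ℝ) := by
    have h1 : (∑ x, E x).trace = (1 : Matrix (Fin d) (Fin d) ℂ).trace := by rw [hsum]
    rw [Matrix.trace_sum, Matrix.trace_one] at h1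
    have h2 : ((∑ x, t x : ℝ) : ℂ) = ((d : ℝ) : ℂ) := by
      push_cast
      rw [← Finset.sum_congr rfl (fun x _ => htr x), h1]
      simp
    exact Complex.ofReal_injective h2
  -- split the sum
  have hkle : k ≤ d ^ 2 := by
    rw [hk]
    calc (Finset.univ.filter fun x => (E x).trace = (aM : ℂ)).card
        ≤ Finset.univ.card := Finset.card_filter_le _ _
      _ = d ^ 2 := by simp
  have hsplit : ∑ x, t x = (k : ℝ) * aM + ((d : ℝ) ^ 2 - (k : ℝ)) * aP := by
    rw [← Finset.sum_filter_add_sum_filter_not Finset.univ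
      (fun x => (E x).trace = (aM : ℂ)) t]
    have e1 : ∑ x ∈ Finset.univ.filter (fun x => (E x).trace = (aM : ℂ)), t x
        = (k : ℝ) * aM := by
      rw [Finset.sum_congr rfl (fun x hx => ?_), Finset.sum_const, hk, nsmul_eq_mul]
      exact Complex.ofReal_injective (by rw [← htr x, (Finset.mem_filter.mp hx).2])
    have e2 : ∑ x ∈ Finset.univ.filter (fun x => ¬ (E x).trace = (aM : ℂ)), t x
        = ((d : ℝ) ^ 2 - (k : ℝ)) * aP := by
      rw [Finset.sum_congr rfl (fun x hx => ?_), Finset.sum_const, nsmul_eq_mul]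
      · congr 1
        have hcards := Finset.card_filter_add_card_filter_not (s := Finset.univ)
          (p := fun x => (E x).trace = (aM : ℂ))
        rw [Finset.card_univ, Fintype.card_fin] at hcards
        have hc2 : (Finset.univ.filter (fun x => ¬ (E x).trace = (aM : ℂ))).card
            = d ^ 2 - k := by omega
        rw [hc2, Nat.cast_sub hkle]
        push_cast
        ring
      · rcases hroots x with h | h
        · exact absurd (by rw [htr x, h]) (Finset.mem_filter.mp hx).2
        · exact h
    rw [e1, e2]
  rw [htot, haM, haP] at hsplit
  linear_combination (-2 : ℝ) * hsplit
end
end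

section
/- Let d ≥ 3, let {E_x}_{x=1}^{d²} be a semi-SIC POVM with parameter b on ℂ^d, let a₋ = (1 − √(1 − 4b(d²−1)))/2, and let k denote the number of indices x with Tr[E_x] = a₋. If a₋ ≠ (1 + √(1 − 4b(d²−1)))/2, then 2k ≠ d² and b = (k − d)·(k + d − d²) / ((d² − 1)·(d² − 2k)²). -/
open Matrix
open scoped ComplexOrder

noncomputable section

lemma trace_conj_unitary {n : Type*} [Fintype n] [DecidableEq n] (U B : Matrix n n ℂ)
    (hU : U * star U = 1) : (star U * B * U).trace = B.trace := by
  rw [Matrix.trace_mul_cycle, hU, Matrix.one_mul]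

lemma trace_mul_self_of_rank_one {n : ℕ} {A : Matrix (Fin n) (Fin n) ℂ}
    (hA : A.IsHermitian) (hr : A.rank = 1) :
    (A * A).trace = A.trace ^ 2 ∧ A.trace = ((∑ i, hA.eigenvalues i : ℝ) : ℂ) := by
  classical
  set U : Matrix (Fin n) (Fin n) ℂ := (hA.eigenvectorUnitary : Matrix (Fin n) (Fin n) ℂ) with hUdef
  have hUU : U * star U = 1 := Matrix.mem_unitaryGroup_iff.mp hA.eigenvectorUnitary.2
  have hDiag : star U * A * U = Matrix.diagonal (RCLike.ofReal ∘ hA.eigenvalues) :=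
    by rw [← hA.conjStarAlgAut_star_eigenvectorUnitary, Unitary.conjStarAlgAut_apply]; simp [hUdef]
  have htr : A.trace = ((∑ i, hA.eigenvalues i : ℝ) : ℂ) := by
    rw [← trace_conj_unitary U A hUU, hDiag, Matrix.trace_diagonal]
    push_cast
    rfl
  have hDD : star U * (A * A) * U =
      Matrix.diagonal (fun i => ((hA.eigenvalues i : ℂ)) * (hA.eigenvalues i : ℂ)) := by
    have hUU' : star U * U = 1 := Matrix.mem_unitaryGroup_iff'.mp hA.eigenvectorUnitary.2
    have key : U * (star U * (A * U)) = A * U := by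
      rw [← Matrix.mul_assoc, hUU, Matrix.one_mul]
    calc star U * (A * A) * U = (star U * A * U) * (star U * A * U) := by
          simp only [Matrix.mul_assoc, key]
      _ = _ := by rw [hDiag, Matrix.diagonal_mul_diagonal]; rfl
  have htr2 : (A * A).trace = ∑ i, (hA.eigenvalues i : ℂ) * (hA.eigenvalues i : ℂ) := by
    rw [← trace_conj_unitary U (A * A) hUU, hDD, Matrix.trace_diagonal]
  -- unique nonzero eigenvalue
  have hcard : Fintype.card {i // hA.eigenvalues i ≠ 0} = 1 := by
    rw [← hA.rank_eq_card_non_zero_eigs, hr]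
  obtain ⟨⟨j, hj⟩, huniq⟩ := Fintype.card_eq_one_iff.mp hcard
  have hzero : ∀ i, i ≠ j → hA.eigenvalues i = 0 := by
    intro i hi
    by_contra h
    exact hi (congrArg Subtype.val (huniq ⟨i, h⟩))
  have hs1 : (∑ i, (hA.eigenvalues i : ℂ)) = (hA.eigenvalues j : ℂ) := by
    apply Finset.sum_eq_single_of_mem j (Finset.mem_univ j)
    intro i _ hi
    simp [hzero i hi]
  refine ⟨?_, htr⟩
  rw [htr2, htr]
  push_cast
  rw [Finset.sum_eq_single_of_mem j (Finset.mem_univ j)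
    (fun i _ hi => by simp [hzero i hi]), hs1]
  ring

theorem b_formula_of_isSemiSIC (d : ℕ) (hd : 3 ≤ d) (b : ℝ)
    (E : Fin (d ^ 2) → Matrix (Fin d) (Fin d) ℂ) (hE : IsSemiSIC d b E)
    (aM : ℝ)
    (haM : aM = (1 - Real.sqrt (1 - 4 * b * ((d : ℝ) ^ 2 - 1))) / 2)
    (k : ℕ)
    (hk : k = (Finset.univ.filter fun x => (E x).trace = (aM : ℂ)).card)
    (hne : aM ≠ (1 + Real.sqrt (1 - 4 * b * ((d : ℝ) ^ 2 - 1))) / 2) :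
    2 * k ≠ d ^ 2 ∧
    b = ((k : ℝ) - (d : ℝ)) * ((k : ℝ) + (d : ℝ) - (d : ℝ) ^ 2) /
        (((d : ℝ) ^ 2 - 1) * ((d : ℝ) ^ 2 - 2 * (k : ℝ)) ^ 2) := by
  classical
  obtain ⟨hpsd, hrank, hsum, -, hb⟩ := hE
  have hherm : ∀ x, (E x).IsHermitian := fun x => (hpsd x).isHermitian
  set t : Fin (d ^ 2) → ℝ := fun x => ∑ i, (hherm x).eigenvalues i with ht
  have htr : ∀ x, (E x).trace = ((t x : ℝ) : ℂ) :=
    fun x => (trace_mul_self_of_rank_one (hherm x) (hrank x)).2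
  have hsq : ∀ x, (E x * E x).trace = (E x).trace ^ 2 :=
    fun x => (trace_mul_self_of_rank_one (hherm x) (hrank x)).1
  have hd3 : (3 : ℝ) ≤ (d : ℝ) := by exact_mod_cast hd
  have hd2 : (1 : ℕ) ≤ d ^ 2 := Nat.one_le_pow _ _ (by omega)
  -- quadratic equation for each trace
  have hq : ∀ x, t x ^ 2 - t x + b * ((d : ℝ) ^ 2 - 1) = 0 := by
    intro x
    have h1 : (E x).trace = ∑ y, (E x * E y).trace := by
      rw [← Matrix.trace_sum, ← Matrix.mul_sum, hsum, Matrix.mul_one]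
    rw [← Finset.add_sum_erase _ _ (Finset.mem_univ x)] at h1
    have h2 : ∑ y ∈ Finset.univ.erase x, (E x * E y).trace
        = ((d ^ 2 - 1 : ℕ) : ℂ) * b := by
      rw [Finset.sum_congr rfl
        (fun y hy => hb x y (Ne.symm (Finset.mem_erase.mp hy).1))]
      rw [Finset.sum_const, Finset.card_erase_of_mem (Finset.mem_univ x),
        Finset.card_univ, Fintype.card_fin, nsmul_eq_mul]
    rw [h2, hsq x, htr x] at h1
    have h3 : t x = t x ^ 2 + ((d ^ 2 - 1 : ℕ) : ℝ) * b := by exact_mod_cast h1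
    have h4 : ((d ^ 2 - 1 : ℕ) : ℝ) = (d : ℝ) ^ 2 - 1 := by
      push_cast [hd2]; ring
    rw [h4] at h3
    nlinarith [h3]
  set s := Real.sqrt (1 - 4 * b * ((d : ℝ) ^ 2 - 1)) with hs
  have x0 : Fin (d ^ 2) := ⟨0, by positivity⟩
  have hdisc : 0 ≤ 1 - 4 * b * ((d : ℝ) ^ 2 - 1) := by
    nlinarith [hq x0, sq_nonneg (2 * t x0 - 1)]
  have hs2 : s ^ 2 = 1 - 4 * b * ((d : ℝ) ^ 2 - 1) := Real.sq_sqrt hdisc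
  -- dichotomy
  have hdich : ∀ x, t x = aM ∨ t x = (1 + s) / 2 := by
    intro x
    have h0 : (2 * t x - 1 - s) * (2 * t x - 1 + s) = 0 := by
      nlinarith [hq x, hs2]
    rcases mul_eq_zero.mp h0 with h | h
    · right; linarith
    · left; rw [haM]; linarith
  -- total sum of traces is d
  have hsumt : ∑ x, t x = (d : ℝ) := by
    have h1 : ((∑ x, t x : ℝ) : ℂ) = (d : ℂ) := by
      push_cast
      calc ∑ x, ((t x : ℝ) : ℂ) = ∑ x, (E x).trace :=
            Finset.sum_congr rfl fun x _ => (htr x).symm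
        _ = (∑ x, E x).trace := (Matrix.trace_sum _ _).symm
        _ = (1 : Matrix (Fin d) (Fin d) ℂ).trace := by rw [hsum]
        _ = (d : ℂ) := by rw [Matrix.trace_one]; simp
    exact_mod_cast h1
  -- split the sum by the filter
  have hmem : ∀ x, ((E x).trace = (aM : ℂ)) ↔ t x = aM := by
    intro x
    rw [htr x]
    exact_mod_cast Iff.rfl
  have hkle : k ≤ d ^ 2 := by
    rw [hk]
    calc (Finset.univ.filter fun x => (E x).trace = (aM : ℂ)).card
        ≤ Finset.univ.card := Finset.card_filter_le _ _
      _ = d ^ 2 := by rw [Finset.card_univ, Fintype.card_fin]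
  have hcardnot : (Finset.univ.filter fun x => ¬ ((E x).trace = (aM : ℂ))).card
      = d ^ 2 - k := by
    have := Finset.card_filter_add_card_filter_not
      (s := (Finset.univ : Finset (Fin (d ^ 2))))
      (p := fun x => (E x).trace = (aM : ℂ))
    rw [Finset.card_univ, Fintype.card_fin, ← hk] at this
    omega
  have hsplit : (k : ℝ) * aM + ((d : ℝ) ^ 2 - (k : ℝ)) * ((1 + s) / 2) = (d : ℝ) := by
    have h1 : ∑ x ∈ Finset.univ.filter (fun x => (E x).trace = (aM : ℂ)), t x
        = (k : ℝ) * aM := by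
      rw [Finset.sum_congr rfl (fun x hx => (hmem x).mp (Finset.mem_filter.mp hx).2),
        Finset.sum_const, ← hk, nsmul_eq_mul]
    have h2 : ∑ x ∈ Finset.univ.filter (fun x => ¬ ((E x).trace = (aM : ℂ))), t x
        = ((d ^ 2 - k : ℕ) : ℝ) * ((1 + s) / 2) := by
      rw [Finset.sum_congr rfl (fun x hx => ?_), Finset.sum_const, hcardnot, nsmul_eq_mul]
      have hx2 := (Finset.mem_filter.mp hx).2
      rcases hdich x with h | h
      · exact absurd ((hmem x).mpr h) hx2
      · exact h
    have h3 := Finset.sum_filter_add_sum_filter_not Finset.univ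
      (fun x => (E x).trace = (aM : ℂ)) t
    rw [h1, h2, hsumt] at h3
    have h4 : ((d ^ 2 - k : ℕ) : ℝ) = (d : ℝ) ^ 2 - (k : ℝ) := by
      push_cast [hkle]; ring
    rw [h4] at h3
    linarith
  rw [haM] at hsplit
  have hlin : s * ((d : ℝ) ^ 2 - 2 * k) = 2 * d - (d : ℝ) ^ 2 := by
    linear_combination (2 : ℝ) * hsplit
  constructor
  · intro h
    have h2 : 2 * (k : ℝ) = (d : ℝ) ^ 2 := by exact_mod_cast congrArg (Nat.cast : ℕ → ℝ) h
    rw [show (d : ℝ) ^ 2 - 2 * k = 0 by linarith, mul_zero] at hlin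
    nlinarith
  · have hm : (d : ℝ) ^ 2 - 2 * k ≠ 0 := by
      intro h
      rw [h, mul_zero] at hlin
      nlinarith
    have key : (1 - 4 * b * ((d : ℝ) ^ 2 - 1)) * ((d : ℝ) ^ 2 - 2 * k) ^ 2
        = (2 * d - (d : ℝ) ^ 2) ^ 2 := by
      rw [← hs2]
      linear_combination (s * ((d : ℝ) ^ 2 - 2 * k) + (2 * d - (d : ℝ) ^ 2)) * hlin
    have hD : ((d : ℝ) ^ 2 - 1) * ((d : ℝ) ^ 2 - 2 * (k : ℝ)) ^ 2 ≠ 0 :=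
      mul_ne_zero (by nlinarith) (pow_ne_zero _ hm)
    rw [eq_div_iff hD]
    linear_combination (-(1 : ℝ) / 4) * key
end
end

section
/- Let θ ∈ (π/3, π/2] be the angle with cos θ = 1/(2√2), and define the 2×2 complex matrices E₁ := (2/5)·[[1,0],[0,0]], E₂ := (1/5)·[[1,1],[1,1]], E₃ := (1/5)·[[1, −√2·e^{−iθ}], [−√2·e^{iθ}, 2]], E₄ := (1/5)·[[1, −√2·e^{iθ}], [−√2·e^{−iθ}, 2]]. Then {E₁, E₂, E₃, E₄} is a semi-SIC POVM with parameter b = 2/25 on ℂ²: each E_x is positive semidefinite of rank one, E₁ + E₂ + E₃ + E₄ = 1, Tr[E_x E_y] = 2/25 for all x ≠ y, and {E₁, E₂, E₃, E₄} spans the real vector space of 2×2 Hermitian matrices. -/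
open Matrix
open scoped ComplexOrder

noncomputable section

/-- `E₁ = (2/5)·[[1,0],[0,0]]`. -/
def E1 : Matrix (Fin 2) (Fin 2) ℂ := (2 / 5 : ℂ) • !![1, 0; 0, 0]

/-- `E₂ = (1/5)·[[1,1],[1,1]]`. -/
def E2 : Matrix (Fin 2) (Fin 2) ℂ := (1 / 5 : ℂ) • !![1, 1; 1, 1]

/-- `E₃ = (1/5)·[[1, −√2·e^{−iθ}], [−√2·e^{iθ}, 2]]`. -/
def E3 (θ : ℝ) : Matrix (Fin 2) (Fin 2) ℂ :=
  (1 / 5 : ℂ) •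
    !![1, -((Real.sqrt 2 : ℝ) : ℂ) * Complex.exp (-(θ : ℂ) * Complex.I);
       -((Real.sqrt 2 : ℝ) : ℂ) * Complex.exp ((θ : ℂ) * Complex.I), 2]

/-- `E₄ = (1/5)·[[1, −√2·e^{iθ}], [−√2·e^{−iθ}, 2]]`. -/
def E4 (θ : ℝ) : Matrix (Fin 2) (Fin 2) ℂ :=
  (1 / 5 : ℂ) •
    !![1, -((Real.sqrt 2 : ℝ) : ℂ) * Complex.exp ((θ : ℂ) * Complex.I);
       -((Real.sqrt 2 : ℝ) : ℂ) * Complex.exp (-(θ : ℂ) * Complex.I), 2]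

/-- The example family `{E₁, E₂, E₃, E₄}`. -/
def exE (θ : ℝ) : Fin 4 → Matrix (Fin 2) (Fin 2) ℂ := ![E1, E2, E3 θ, E4 θ]

/- Auxiliary lemmas -/

lemma row2_conjTranspose_mul (a b : ℂ) :
    (!![a, b] : Matrix (Fin 1) (Fin 2) ℂ)ᴴ * !![a, b] =
      !![(starRingEnd ℂ) a * a, (starRingEnd ℂ) a * b;
         (starRingEnd ℂ) b * a, (starRingEnd ℂ) b * b] := by
  ext i j
  fin_cases i <;> fin_cases j <;>
    simp [Matrix.mul_apply, Matrix.conjTranspose_apply, Fin.sum_univ_succ]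

lemma rank_ne_zero_of_ne_zero {A : Matrix (Fin 1) (Fin 2) ℂ} (h : A ≠ 0) : A.rank ≠ 0 := by
  intro h0
  apply h
  rw [Matrix.rank] at h0
  have hbot : LinearMap.range A.mulVecLin = ⊥ := Submodule.finrank_eq_zero.mp h0
  have hz : A.mulVecLin = 0 := LinearMap.range_eq_bot.mp hbot
  ext i j
  have := congrFun (congrArg (fun f => f (Pi.single j 1)) hz) i
  simpa [Matrix.mulVecLin_apply] using this

lemma rank_eq_one_of (B : Matrix (Fin 1) (Fin 2) ℂ) (hB : B ≠ 0) : (Bᴴ * B).rank = 1 := by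
  rw [Matrix.rank_conjTranspose_mul_self]
  refine le_antisymm ?_ ?_
  · simpa using B.rank_le_card_height
  · exact Nat.one_le_iff_ne_zero.mpr (rank_ne_zero_of_ne_zero hB)

lemma hb5 : ((Real.sqrt 5 : ℝ):ℂ)⁻¹ * ((Real.sqrt 5 : ℝ):ℂ)⁻¹ = 1/5 := by
  rw [← mul_inv, ← Complex.ofReal_mul, Real.mul_self_sqrt (by norm_num)]
  norm_num

lemma hb2 : ((Real.sqrt 2 : ℝ):ℂ) * ((Real.sqrt 2 : ℝ):ℂ) = 2 := by
  rw [← Complex.ofReal_mul, Real.mul_self_sqrt (by norm_num)]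
  norm_num

lemma decomp1 :
    E1 = (!![((Real.sqrt 2 : ℝ):ℂ) * ((Real.sqrt 5 : ℝ):ℂ)⁻¹, 0] :
        Matrix (Fin 1) (Fin 2) ℂ)ᴴ *
      !![((Real.sqrt 2 : ℝ):ℂ) * ((Real.sqrt 5 : ℝ):ℂ)⁻¹, 0] := by
  rw [row2_conjTranspose_mul]
  ext i j
  fin_cases i <;> fin_cases j <;>
    simp [E1] <;>
    linear_combination (-(((Real.sqrt 5:ℝ):ℂ)⁻¹*((Real.sqrt 5:ℝ):ℂ)⁻¹)) * hb2 -
      (2 : ℂ) * hb5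

lemma decomp2 :
    E2 = (!![((Real.sqrt 5 : ℝ):ℂ)⁻¹, ((Real.sqrt 5 : ℝ):ℂ)⁻¹] :
        Matrix (Fin 1) (Fin 2) ℂ)ᴴ *
      !![((Real.sqrt 5 : ℝ):ℂ)⁻¹, ((Real.sqrt 5 : ℝ):ℂ)⁻¹] := by
  rw [row2_conjTranspose_mul]
  ext i j
  fin_cases i <;> fin_cases j <;>
    simp [E2] <;>
    linear_combination -hb5

lemma decomp3 (θ c s : ℝ)
    (he : Complex.exp ((θ:ℂ)*Complex.I) = (c:ℂ) + (s:ℂ)*Complex.I)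
    (he2 : Complex.exp (-((θ:ℂ)*Complex.I)) = (c:ℂ) - (s:ℂ)*Complex.I)
    (hpy : c^2 + s^2 = 1) :
    E3 θ = (!![((Real.sqrt 5 : ℝ):ℂ)⁻¹,
        -((Real.sqrt 2 : ℝ) : ℂ) * ((Real.sqrt 5 : ℝ):ℂ)⁻¹ * Complex.exp (-((θ:ℂ)*Complex.I))] :
        Matrix (Fin 1) (Fin 2) ℂ)ᴴ *
      !![((Real.sqrt 5 : ℝ):ℂ)⁻¹,
        -((Real.sqrt 2 : ℝ) : ℂ) * ((Real.sqrt 5 : ℝ):ℂ)⁻¹ * Complex.exp (-((θ:ℂ)*Complex.I))] := by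
  have hpyC : (c:ℂ)^2 + (s:ℂ)^2 = 1 := by exact_mod_cast hpy
  rw [row2_conjTranspose_mul]
  ext i j
  fin_cases i <;> fin_cases j <;>
    simp [E3, he, he2, Complex.conj_ofReal, map_sub, map_add, Complex.conj_I]
  · linear_combination -hb5
  · linear_combination (-((Real.sqrt 2:ℝ):ℂ) * ((c:ℂ) - (s:ℂ)*Complex.I)) * hb5
  · linear_combination (-((Real.sqrt 2:ℝ):ℂ) * ((c:ℂ) + (s:ℂ)*Complex.I)) * hb5
  · linear_combination
      (-(((c:ℂ)^2 - (s:ℂ)^2*Complex.I^2)) * ((Real.sqrt 5:ℝ):ℂ)⁻¹ * ((Real.sqrt 5:ℝ):ℂ)⁻¹) * hb2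
      + (-2*((c:ℂ)^2 - (s:ℂ)^2*Complex.I^2)) * hb5
      + (-(2/5 : ℂ)) * hpyC
      + ((2/5)*(s:ℂ)^2) * Complex.I_sq

lemma decomp4 (θ c s : ℝ)
    (he : Complex.exp ((θ:ℂ)*Complex.I) = (c:ℂ) + (s:ℂ)*Complex.I)
    (he2 : Complex.exp (-((θ:ℂ)*Complex.I)) = (c:ℂ) - (s:ℂ)*Complex.I)
    (hpy : c^2 + s^2 = 1) :
    E4 θ = (!![((Real.sqrt 5 : ℝ):ℂ)⁻¹,
        -((Real.sqrt 2 : ℝ) : ℂ) * ((Real.sqrt 5 : ℝ):ℂ)⁻¹ * Complex.exp ((θ:ℂ)*Complex.I)] :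
        Matrix (Fin 1) (Fin 2) ℂ)ᴴ *
      !![((Real.sqrt 5 : ℝ):ℂ)⁻¹,
        -((Real.sqrt 2 : ℝ) : ℂ) * ((Real.sqrt 5 : ℝ):ℂ)⁻¹ * Complex.exp ((θ:ℂ)*Complex.I)] := by
  have hpyC : (c:ℂ)^2 + (s:ℂ)^2 = 1 := by exact_mod_cast hpy
  rw [row2_conjTranspose_mul]
  ext i j
  fin_cases i <;> fin_cases j <;>
    simp [E4, he, he2, Complex.conj_ofReal, map_sub, map_add, Complex.conj_I]
  · linear_combination -hb5
  · linear_combination (-((Real.sqrt 2:ℝ):ℂ) * ((c:ℂ) + (s:ℂ)*Complex.I)) * hb5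
  · linear_combination (-((Real.sqrt 2:ℝ):ℂ) * ((c:ℂ) - (s:ℂ)*Complex.I)) * hb5
  · linear_combination
      (-(((c:ℂ)^2 - (s:ℂ)^2*Complex.I^2)) * ((Real.sqrt 5:ℝ):ℂ)⁻¹ * ((Real.sqrt 5:ℝ):ℂ)⁻¹) * hb2
      + (-2*((c:ℂ)^2 - (s:ℂ)^2*Complex.I^2)) * hb5
      + (-(2/5 : ℂ)) * hpyC
      + ((2/5)*(s:ℂ)^2) * Complex.I_sq

set_option maxHeartbeats 1000000 in
theorem example_isSemiSIC (θ : ℝ) (hθcos : Real.cos θ = 1 / (2 * Real.sqrt 2))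
    (hθmem : θ ∈ Set.Ioc (Real.pi / 3) (Real.pi / 2)) :
    (∀ x, (exE θ x).PosSemidef) ∧
    (∀ x, (exE θ x).rank = 1) ∧
    (E1 + E2 + E3 θ + E4 θ = 1) ∧
    (∀ x y, x ≠ y → (exE θ x * exE θ y).trace = ((2 / 25 : ℝ) : ℂ)) ∧
    (∀ A : Matrix (Fin 2) (Fin 2) ℂ, A.IsHermitian →
      A ∈ Submodule.span ℝ (Set.range (exE θ))) := by
  obtain ⟨hθ1, hθ2⟩ := hθmem
  have h2pos : (0:ℝ) < Real.sqrt 2 := by positivity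
  have h2 : Real.sqrt 2 * Real.sqrt 2 = 2 := Real.mul_self_sqrt (by norm_num)
  have hcs : Real.sqrt 2 * Real.cos θ = 1/2 := by
    rw [hθcos]; field_simp
  have hc2 : Real.cos θ ^ 2 = 1/8 := by nlinarith [hcs, h2]
  have hs2 : Real.sin θ ^ 2 = 7/8 := by
    have hpy := Real.sin_sq_add_cos_sq θ
    nlinarith [hpy]
  have hpy : Real.cos θ ^ 2 + Real.sin θ ^ 2 = 1 := by
    have := Real.sin_sq_add_cos_sq θ; linarith
  have hspos : 0 < Real.sin θ := by
    apply Real.sin_pos_of_pos_of_lt_pi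
    · have := Real.pi_pos; linarith
    · have := Real.pi_pos; linarith
  have hcos : ((Real.cos θ : ℝ):ℂ) = Complex.cos (θ:ℂ) := Complex.ofReal_cos θ
  have hsin : ((Real.sin θ : ℝ):ℂ) = Complex.sin (θ:ℂ) := Complex.ofReal_sin θ
  have he : Complex.exp ((θ:ℂ) * Complex.I)
      = Complex.cos (θ:ℂ) + Complex.sin (θ:ℂ) * Complex.I := Complex.exp_mul_I _
  have he2 : Complex.exp (-((θ:ℂ) * Complex.I))
      = Complex.cos (θ:ℂ) - Complex.sin (θ:ℂ) * Complex.I := by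
    rw [show -((θ:ℂ) * Complex.I) = (-(θ:ℂ)) * Complex.I by ring, Complex.exp_mul_I,
      Complex.cos_neg, Complex.sin_neg]
    ring
  have he2' : Complex.exp (-(θ:ℂ) * Complex.I)
      = Complex.cos (θ:ℂ) - Complex.sin (θ:ℂ) * Complex.I := by
    rw [← he2]; ring_nf
  -- complex casts of the key real identities
  have hcsC : ((Real.sqrt 2 : ℝ):ℂ) * Complex.cos (θ:ℂ) = 1/2 := by
    rw [← hcos, ← Complex.ofReal_mul, hcs]; norm_num
  have hc2C : Complex.cos (θ:ℂ)^2 = 1/8 := by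
    rw [← hcos, ← Complex.ofReal_pow, hc2]; norm_num
  have hs2C : Complex.sin (θ:ℂ)^2 = 7/8 := by
    rw [← hsin, ← Complex.ofReal_pow, hs2]; norm_num
  have hpyc : Complex.cos (θ:ℂ)^2 + Complex.sin (θ:ℂ)^2 = 1 := by
    rw [hc2C, hs2C]; norm_num
  have hD1 := decomp1
  have hD2 := decomp2
  have hD3 := decomp3 θ (Real.cos θ) (Real.sin θ) (by rw [he, hcos, hsin]) (by rw [he2, hcos, hsin]) hpy
  have hD4 := decomp4 θ (Real.cos θ) (Real.sin θ) (by rw [he, hcos, hsin]) (by rw [he2, hcos, hsin]) hpy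
  have hb5ne : ((Real.sqrt 5 : ℝ):ℂ)⁻¹ ≠ 0 := by
    simp only [ne_eq, inv_eq_zero, Complex.ofReal_eq_zero]
    exact Real.sqrt_ne_zero'.mpr (by norm_num)
  have hb2ne : ((Real.sqrt 2 : ℝ):ℂ) ≠ 0 := by
    simp only [ne_eq, Complex.ofReal_eq_zero]
    exact Real.sqrt_ne_zero'.mpr (by norm_num)
  have hexpne : Complex.exp (-((θ:ℂ)*Complex.I)) ≠ 0 := Complex.exp_ne_zero _
  have hexpne' : Complex.exp ((θ:ℂ)*Complex.I) ≠ 0 := Complex.exp_ne_zero _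
  refine ⟨?_, ?_, ?_, ?_, ?_⟩
  · intro x
    fin_cases x
    · show E1.PosSemidef
      rw [hD1]; exact Matrix.posSemidef_conjTranspose_mul_self _
    · show E2.PosSemidef
      rw [hD2]; exact Matrix.posSemidef_conjTranspose_mul_self _
    · show (E3 θ).PosSemidef
      rw [hD3]; exact Matrix.posSemidef_conjTranspose_mul_self _
    · show (E4 θ).PosSemidef
      rw [hD4]; exact Matrix.posSemidef_conjTranspose_mul_self _
  · intro x
    fin_cases x
    · show E1.rank = 1
      rw [hD1]
      refine rank_eq_one_of _ (fun h => ?_)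
      have := congrFun (congrFun h 0) 0
      simp [mul_eq_zero, hb2ne, hb5ne] at this
    · show E2.rank = 1
      rw [hD2]
      refine rank_eq_one_of _ (fun h => ?_)
      have := congrFun (congrFun h 0) 0
      simp [hb5ne] at this
    · show (E3 θ).rank = 1
      rw [hD3]
      refine rank_eq_one_of _ (fun h => ?_)
      have := congrFun (congrFun h 0) 0
      simp [hb5ne] at this
    · show (E4 θ).rank = 1
      rw [hD4]
      refine rank_eq_one_of _ (fun h => ?_)
      have := congrFun (congrFun h 0) 0
      simp [hb5ne] at this
  · ext i j
    fin_cases i <;> fin_cases j <;>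
      simp [E1, E2, E3, E4, he, he2, he2', Matrix.one_apply] <;>
      first
        | linear_combination (0 : ℂ) * hcsC
        | linear_combination (-2/5 : ℂ) * hcsC
        | linear_combination (2/5 : ℂ) * hcsC
  · intro x y hxy
    fin_cases x <;> fin_cases y <;>
      first
        | exact absurd rfl hxy
        | (simp [exE, E1, E2, E3, E4, Matrix.trace, Matrix.mul_apply,
            Fin.sum_univ_two, he, he2, he2']
           all_goals push_cast
           all_goals first
             | linear_combination (0 : ℂ) * hcsC
             | linear_combination (-(2/25 : ℂ)) * hcsC
             | linear_combination ((2/25:ℂ)*(Complex.cos (θ:ℂ)^2 + Complex.sin (θ:ℂ)^2*Complex.I^2)) * hb2 +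
                 (4/25 : ℂ)*hc2C - (4/25 : ℂ)*hs2C +
                 ((4/25)*Complex.sin (θ:ℂ)^2) * Complex.I_sq)
  · intro A hA
    have hA00 : A 0 0 = (((A 0 0).re : ℝ) : ℂ) := by
      have h := hA.apply 0 0
      exact (Complex.conj_eq_iff_re.mp h).symm
    have hA11 : A 1 1 = (((A 1 1).re : ℝ) : ℂ) := by
      have h := hA.apply 1 1
      exact (Complex.conj_eq_iff_re.mp h).symm
    have hA01 : A 0 1 = (((A 0 1).re : ℝ) : ℂ) + (((A 0 1).im : ℝ) : ℂ) * Complex.I :=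
      (Complex.re_add_im _).symm
    have hA10 : A 1 0 = (((A 0 1).re : ℝ) : ℂ) - (((A 0 1).im : ℝ) : ℂ) * Complex.I := by
      have h := hA.apply 1 0
      rw [← h]
      simp [Complex.ext_iff]
    set r := (A 0 0).re with hr
    set t := (A 1 1).re with ht
    set u := (A 0 1).re with hu
    set v := (A 0 1).im with hv
    have hsne : Real.sqrt 2 * Real.sin θ ≠ 0 := by positivity
    set w := 5 * v / (Real.sqrt 2 * Real.sin θ) with hw
    have hwR : Real.sqrt 2 * Real.sin θ * w = 5 * v := by
      rw [hw]; field_simp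
    have hwC : ((Real.sqrt 2:ℝ):ℂ) * Complex.sin (θ:ℂ) * ((w:ℝ):ℂ) = 5 * ((v:ℝ):ℂ) := by
      rw [← hsin, ← Complex.ofReal_mul, ← Complex.ofReal_mul, hwR]; push_cast; ring
    have hAeq : A = ((5*r - 2*u - 3*t)/2) • E1 + (4*u + t) • E2 +
        ((t - u) + w/2) • E3 θ + ((t - u) - w/2) • E4 θ := by
      ext i j
      fin_cases i <;> fin_cases j
      · rw [show ((⟨0, by norm_num⟩ : Fin 2)) = 0 from rfl]
        rw [hA00]
        simp [Matrix.add_apply, Matrix.smul_apply, E1, E2, E3, E4, he, he2, he2',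
          Complex.real_smul]
        push_cast
        ring
      · rw [show ((⟨0, by norm_num⟩ : Fin 2)) = 0 from rfl,
          show ((⟨1, by norm_num⟩ : Fin 2)) = 1 from rfl]
        rw [hA01]
        simp [Matrix.add_apply, Matrix.smul_apply, E1, E2, E3, E4, he, he2, he2',
          Complex.real_smul]
        push_cast
        linear_combination ((2*((t:ℝ):ℂ) - 2*((u:ℝ):ℂ))/5) * hcsC -
          (Complex.I/5) * hwC
      · rw [show ((⟨0, by norm_num⟩ : Fin 2)) = 0 from rfl,
          show ((⟨1, by norm_num⟩ : Fin 2)) = 1 from rfl]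
        rw [hA10]
        simp [Matrix.add_apply, Matrix.smul_apply, E1, E2, E3, E4, he, he2, he2',
          Complex.real_smul]
        push_cast
        linear_combination ((2*((t:ℝ):ℂ) - 2*((u:ℝ):ℂ))/5) * hcsC +
          (Complex.I/5) * hwC
      · rw [show ((⟨1, by norm_num⟩ : Fin 2)) = 1 from rfl]
        rw [hA11]
        simp [Matrix.add_apply, Matrix.smul_apply, E1, E2, E3, E4, he, he2, he2',
          Complex.real_smul]
        push_cast
        ring
    rw [hAeq]
    have hmem : ∀ i : Fin 4, exE θ i ∈ Submodule.span ℝ (Set.range (exE θ)) :=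
      fun i => Submodule.subset_span ⟨i, rfl⟩
    have h0 : E1 ∈ Submodule.span ℝ (Set.range (exE θ)) := hmem 0
    have h1 : E2 ∈ Submodule.span ℝ (Set.range (exE θ)) := hmem 1
    have h2' : E3 θ ∈ Submodule.span ℝ (Set.range (exE θ)) := hmem 2
    have h3 : E4 θ ∈ Submodule.span ℝ (Set.range (exE θ)) := hmem 3
    exact Submodule.add_mem _ (Submodule.add_mem _ (Submodule.add_mem _
      (Submodule.smul_mem _ _ h0) (Submodule.smul_mem _ _ h1))
      (Submodule.smul_mem _ _ h2')) (Submodule.smul_mem _ _ h3)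
end
end

section
/- Let {E₁, E₂, E₃, E₄} be the semi-SIC POVM with parameter b = 2/25 on ℂ² given by E₁ := (2/5)·[[1,0],[0,0]], E₂ := (1/5)·[[1,1],[1,1]], E₃ := (1/5)·[[1, −√2·e^{−iθ}], [−√2·e^{iθ}, 2]], E₄ := (1/5)·[[1, −√2·e^{iθ}], [−√2·e^{−iθ}, 2]], where cos θ = 1/(2√2) and θ ∈ (π/3, π/2]. Define F₁ := (25/2)E₁ − (5/2)(E₁+E₂) − 1, F₂ := (25/2)E₂ − (5/2)(E₁+E₂) − 1, F₃ := (25/7)E₃ + (5/7)(E₃+E₄) − 1, F₄ := (25/7)E₄ + (5/7)(E₃+E₄) − 1. Then Tr[E_x F_y] = δ_{xy} for all x, y ∈ {1,2,3,4}. -/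
open Matrix
open scoped ComplexOrder

noncomputable section

/-- `F₁ = (25/2)E₁ − (5/2)(E₁+E₂) − 1`. -/
def F1 : Matrix (Fin 2) (Fin 2) ℂ := (25 / 2 : ℂ) • E1 - (5 / 2 : ℂ) • (E1 + E2) - 1

/-- `F₂ = (25/2)E₂ − (5/2)(E₁+E₂) − 1`. -/
def F2 : Matrix (Fin 2) (Fin 2) ℂ := (25 / 2 : ℂ) • E2 - (5 / 2 : ℂ) • (E1 + E2) - 1

/-- `F₃ = (25/7)E₃ + (5/7)(E₃+E₄) − 1`. -/
def F3 (θ : ℝ) : Matrix (Fin 2) (Fin 2) ℂ :=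
  (25 / 7 : ℂ) • E3 θ + (5 / 7 : ℂ) • (E3 θ + E4 θ) - 1

/-- `F₄ = (25/7)E₄ + (5/7)(E₃+E₄) − 1`. -/
def F4 (θ : ℝ) : Matrix (Fin 2) (Fin 2) ℂ :=
  (25 / 7 : ℂ) • E4 θ + (5 / 7 : ℂ) • (E3 θ + E4 θ) - 1

/-- The dual family `{F₁, F₂, F₃, F₄}`. -/
def exF (θ : ℝ) : Fin 4 → Matrix (Fin 2) (Fin 2) ℂ := ![F1, F2, F3 θ, F4 θ]

set_option maxHeartbeats 2000000 in
theorem example_dual_basis (θ : ℝ) (hθcos : Real.cos θ = 1 / (2 * Real.sqrt 2))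
    (hθmem : θ ∈ Set.Ioc (Real.pi / 3) (Real.pi / 2)) :
    ∀ x y : Fin 4, (exE θ x * exF θ y).trace = if x = y then 1 else 0 := by
  have hs2 : ((Real.sqrt 2 : ℝ) : ℂ) * ((Real.sqrt 2 : ℝ) : ℂ) = 2 := by
    norm_cast
    exact Real.mul_self_sqrt (by norm_num)
  have hmul : Complex.exp ((θ : ℂ) * Complex.I) * Complex.exp (-((θ : ℂ) * Complex.I)) = 1 := by
    rw [← Complex.exp_add, add_neg_cancel, Complex.exp_zero]
  have hr : Real.sqrt 2 * (2 * Real.cos θ) = 1 := by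
    rw [hθcos]
    have h2 : Real.sqrt 2 ≠ 0 := by positivity
    field_simp
  have hadd : ((Real.sqrt 2 : ℝ) : ℂ) *
      (Complex.exp ((θ : ℂ) * Complex.I) + Complex.exp (-((θ : ℂ) * Complex.I))) = 1 := by
    have h1 := Complex.exp_mul_I (θ : ℂ)
    have h2 := Complex.exp_mul_I (-(θ : ℂ))
    rw [neg_mul] at h2
    rw [h1, h2, Complex.cos_neg, Complex.sin_neg]
    have hr' := congrArg (Complex.ofReal) hr
    push_cast at hr'
    linear_combination hr'
  intro x y
  fin_cases x <;> fin_cases y <;>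
    simp [exE, exF, E1, E2, E3, E4, F1, F2, F3, F4, Matrix.trace, Matrix.diag,
      Matrix.mul_apply, Fin.sum_univ_two, Matrix.one_apply]
  all_goals first
    | (norm_num; done)
    | linear_combination ((1 : ℂ) / 10) * hadd
    | linear_combination (-(2 : ℂ) / 5) * hadd
    | linear_combination (-(1 : ℂ) / 5) * hadd
    | linear_combination ((2 : ℂ) / 7) * (((Real.sqrt 2 : ℝ) : ℂ) * ((Real.sqrt 2 : ℝ) : ℂ)) * hmul
        + ((1 : ℂ) / 35) * (((Real.sqrt 2 : ℝ) : ℂ) *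
            (Complex.exp ((θ : ℂ) * Complex.I) + Complex.exp (-((θ : ℂ) * Complex.I))) + 1) * hadd
        + ((2 : ℂ) / 7) * hs2
    | linear_combination (-(2 : ℂ) / 7) * (((Real.sqrt 2 : ℝ) : ℂ) * ((Real.sqrt 2 : ℝ) : ℂ)) * hmul
        + ((6 : ℂ) / 35) * (((Real.sqrt 2 : ℝ) : ℂ) *
            (Complex.exp ((θ : ℂ) * Complex.I) + Complex.exp (-((θ : ℂ) * Complex.I))) + 1) * hadd
        + (-(2 : ℂ) / 7) * hs2
end
end

section
/- Let {F₁, F₂, F₃, F₄} be the dual basis of the b = 2/25 semi-SIC POVM on ℂ², i.e., F₁ := (25/2)E₁ − (5/2)(E₁+E₂) − 1, F₂ := (25/2)E₂ − (5/2)(E₁+E₂) − 1, F₃ := (25/7)E₃ + (5/7)(E₃+E₄) − 1, F₄ := (25/7)E₄ + (5/7)(E₃+E₄) − 1, where E₁ := (2/5)·[[1,0],[0,0]], E₂ := (1/5)·[[1,1],[1,1]], E₃ := (1/5)·[[1, −√2·e^{−iθ}], [−√2·e^{iθ}, 2]], E₄ := (1/5)·[[1, −√2·e^{iθ}], [−√2·e^{−iθ},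 2]], cos θ = 1/(2√2), θ ∈ (π/3, π/2]. Then for every real vector p = (p₁, p₂, p₃, p₄), det(Σ_{y=1}^{4} p_y F_y) = −4p₁² − 4p₂² − (8/7)p₃² − (8/7)p₄² + (9/2)p₁p₂ + 2p₁p₃ + 2p₁p₄ + 2p₂p₃ + 2p₂p₄ + (9/7)p₃p₄. -/
open Matrix
open scoped ComplexOrder

noncomputable section

theorem det_sum_dual (θ : ℝ) (hθcos : Real.cos θ = 1 / (2 * Real.sqrt 2))
    (hθmem : θ ∈ Set.Ioc (Real.pi / 3) (Real.pi / 2))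
    (p : Fin 4 → ℝ) :
    (∑ y, (p y : ℂ) • exF θ y).det =
      ((-4 * p 0 ^ 2 - 4 * p 1 ^ 2 - 8 / 7 * p 2 ^ 2 - 8 / 7 * p 3 ^ 2 +
        9 / 2 * p 0 * p 1 + 2 * p 0 * p 2 + 2 * p 0 * p 3 +
        2 * p 1 * p 2 + 2 * p 1 * p 3 + 9 / 7 * p 2 * p 3 : ℝ) : ℂ) := by
  have hexp : Complex.exp ((θ : ℂ) * Complex.I) = (Real.cos θ : ℂ) + (Real.sin θ : ℂ) * Complex.I := by
    rw [Complex.exp_mul_I]; simp [Complex.ofReal_cos, Complex.ofReal_sin]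
  have hexp' : Complex.exp (-(θ : ℂ) * Complex.I) = (Real.cos θ : ℂ) - (Real.sin θ : ℂ) * Complex.I := by
    rw [Complex.exp_mul_I]; simp [Complex.ofReal_cos, Complex.ofReal_sin]; ring
  have hr2 : ((Real.sqrt 2 : ℝ) : ℂ) ^ 2 = 2 := by
    norm_cast; rw [Real.sq_sqrt]; norm_num
  have hc : (Real.cos θ : ℂ) = 1 / (2 * ((Real.sqrt 2 : ℝ) : ℂ)) := by
    rw [hθcos]; push_cast; ring
  have hc2 : (Real.cos θ : ℂ) ^ 2 = 1 / 8 := by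
    rw [hc, div_pow, mul_pow, hr2]; norm_num
  have hs2 : (Real.sin θ : ℂ) ^ 2 = 7 / 8 := by
    have : (Real.sin θ : ℂ) ^ 2 = 1 - (Real.cos θ : ℂ) ^ 2 := by
      norm_cast; rw [Real.sin_sq]
    rw [this, hc2]; norm_num
  simp only [exF, F1, F2, F3, F4, E1, E2, E3, E4, Fin.sum_univ_four, Matrix.det_fin_two,
    Matrix.cons_val', Matrix.cons_val_zero, Matrix.cons_val_one, Matrix.head_cons,
    Matrix.head_fin_const, Matrix.add_apply, Matrix.sub_apply, Matrix.smul_apply,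
    Matrix.one_apply, Matrix.cons_val_fin_one, Matrix.empty_val', Matrix.head_val',
    Matrix.of_apply, smul_eq_mul, Fin.isValue, hexp, hexp', Matrix.cons_val_two, Matrix.cons_val_three]
  norm_num
  push_cast
  ring_nf
  have hcc : Complex.cos (θ : ℂ) = 1 / (2 * ((Real.sqrt 2 : ℝ) : ℂ)) := by
    rw [← Complex.ofReal_cos]; exact hc
  have hss : Complex.sin (θ : ℂ) ^ 2 = 7 / 8 := by
    rw [← Complex.ofReal_sin]; exact hs2
  have h1 : ((Real.sqrt 2 : ℝ) : ℂ) * Complex.cos (θ : ℂ) = 1 / 2 := by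
    rw [hcc]; field_simp
  have h2 : ((Real.sqrt 2 : ℝ) : ℂ) ^ 2 * Complex.cos (θ : ℂ) ^ 2 = 1 / 4 := by
    rw [← mul_pow, h1]; norm_num
  have h4 : ((Real.sqrt 2 : ℝ) : ℂ) ^ 2 * Complex.sin (θ : ℂ) ^ 2 * Complex.I ^ 2 = -(7 / 4) := by
    rw [hr2, hss, Complex.I_sq]; norm_num
  linear_combination (-(↑(p 0) * ↑(p 2)) - ↑(p 0) * ↑(p 3) + 4 * ↑(p 1) * ↑(p 2) + 4 * ↑(p 1) * ↑(p 3)) * h1 +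
    (-2 * (↑(p 2) : ℂ) * ↑(p 3) - ↑(p 2) ^ 2 - ↑(p 3) ^ 2) * h2 +
    (-(50 / 49) * (↑(p 2) : ℂ) * ↑(p 3) + 25 / 49 * ↑(p 2) ^ 2 + 25 / 49 * ↑(p 3) ^ 2) * h4
end
end

section
/- With the notation of the b = 2/25 dual basis {F₁, F₂, F₃, F₄} on ℂ² (F₁ := (25/2)E₁ − (5/2)(E₁+E₂) − 1, F₂ := (25/2)E₂ − (5/2)(E₁+E₂) − 1, F₃ := (25/7)E₃ + (5/7)(E₃+E₄) − 1, F₄ := (25/7)E₄ + (5/7)(E₃+E₄) − 1, where E₁ := (2/5)·[[1,0],[0,0]], E₂ := (1/5)·[[1,1],[1,1]], E₃ := (1/5)·[[1, −√2·e^{−iθ}], [−√2·e^{iθ}, 2]], E₄ := (1/5)·[[1, −√2·e^{iθ}], [−√2·e^{−iθ}, 2]], cos θ = 1/(2√2), θ ∈ (π/3, π/2]): for every real vector p = (p₁, p₂, p₃, p₄) with p₁ + p₂ + p₃ + p₄ = 1, the Hermitian matrix ρ := Σ_{y=1}^{4} p_y F_y is positive semidefinite if and only if f(p) ≥ 0,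 where f(p) := −4p₁² − 4p₂² − (8/7)p₃² − (8/7)p₄² + (9/2)p₁p₂ + 2p₁p₃ + 2p₁p₄ + 2p₂p₃ + 2p₂p₄ + (9/7)p₃p₄. -/
open Matrix
open scoped ComplexOrder

noncomputable section
set_option maxHeartbeats 1000000

lemma quadAux (a d r s X Y P Q : ℝ) (ha : 0 ≤ a) (hd : 0 ≤ d)
    (hdet : r ^ 2 + s ^ 2 ≤ a * d) (hXY : P ^ 2 + Q ^ 2 = X * Y) (hX : 0 ≤ X) (hY : 0 ≤ Y) :
    0 ≤ a * X + d * Y + 2 * (r * P + s * Q) := by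
  have h1 : (r * P + s * Q) ^ 2 ≤ (r ^ 2 + s ^ 2) * (P ^ 2 + Q ^ 2) := by
    nlinarith [sq_nonneg (r * Q - s * P)]
  have h2 : (r ^ 2 + s ^ 2) * (P ^ 2 + Q ^ 2) ≤ a * d * (X * Y) := by
    rw [hXY]
    exact mul_le_mul_of_nonneg_right hdet (mul_nonneg hX hY)
  nlinarith [sq_nonneg (a * X - d * Y), mul_nonneg ha hX, mul_nonneg hd hY, h1, h2]

lemma keyPSD (a d r s : ℝ) (htr : a + d = 1)
    (A : Matrix (Fin 2) (Fin 2) ℂ)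
    (hA : A = !![(a : ℂ), ⟨r, s⟩; ⟨r, -s⟩, (d : ℂ)]) :
    A.PosSemidef ↔ 0 ≤ a * d - (r ^ 2 + s ^ 2) := by
  have hherm : A.IsHermitian := by
    rw [hA]
    ext i j
    fin_cases i <;> fin_cases j <;>
      simp [Matrix.conjTranspose_apply, Complex.ext_iff, Complex.conj_re, Complex.conj_im]
  have hdet : A.det = ((a * d - (r ^ 2 + s ^ 2) : ℝ) : ℂ) := by
    rw [hA, Matrix.det_fin_two_of]
    apply Complex.ext <;> simp [Complex.mul_re, Complex.mul_im, ← Complex.ofReal_pow] <;> ring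
  constructor
  · intro h
    have h1 := hherm.det_eq_prod_eigenvalues
    rw [hdet] at h1
    have h2 : (0 : ℝ) ≤ ∏ i, hherm.eigenvalues i := by
      exact Finset.prod_nonneg fun i _ => h.eigenvalues_nonneg i
    have h3 : ((a * d - (r ^ 2 + s ^ 2) : ℝ) : ℂ) = ((∏ i, hherm.eigenvalues i : ℝ) : ℂ) := by
      rw [h1]; norm_cast
    have := Complex.ofReal_inj.mp h3
    linarith
  · intro hdet'
    have ha : 0 ≤ a := by nlinarith [sq_nonneg r, sq_nonneg s]
    have hd : 0 ≤ d := by nlinarith [sq_nonneg r, sq_nonneg s]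
    refine Matrix.PosSemidef.of_dotProduct_mulVec_nonneg hherm fun x => ?_
    rw [hA]
    set u0 := (x 0).re; set v0 := (x 0).im; set u1 := (x 1).re; set v1 := (x 1).im
    have hx0 : x 0 = ⟨u0, v0⟩ := rfl
    have hx1 : x 1 = ⟨u1, v1⟩ := rfl
    rw [Complex.le_def]
    constructor
    · simp only [dotProduct, Matrix.mulVec, Fin.sum_univ_two, Pi.star_apply,
        Matrix.of_apply, Matrix.cons_val', Matrix.cons_val_zero, Matrix.cons_val_one,
        Matrix.head_cons, Matrix.head_fin_const, Matrix.cons_val_fin_one, dotProduct,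
        hx0, hx1, RCLike.star_def]
      simp [Complex.add_re, Complex.mul_re, Complex.mul_im, Complex.conj_re, Complex.conj_im,
        Complex.zero_re]
      have := quadAux a d r s (u0 ^ 2 + v0 ^ 2) (u1 ^ 2 + v1 ^ 2)
        (u0 * u1 + v0 * v1) (v0 * u1 - u0 * v1) ha hd (by linarith) (by ring)
        (by positivity) (by positivity)
      ring_nf at this ⊢
      linarith
    · simp only [dotProduct, Matrix.mulVec, Fin.sum_univ_two, Pi.star_apply,
        Matrix.of_apply, Matrix.cons_val', Matrix.cons_val_zero, Matrix.cons_val_one,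
        Matrix.head_cons, Matrix.head_fin_const, Matrix.cons_val_fin_one, dotProduct,
        hx0, hx1, RCLike.star_def]
      simp [Complex.add_im, Complex.mul_re, Complex.mul_im, Complex.conj_re, Complex.conj_im]
      ring

theorem posSemidef_iff_f_nonneg (θ : ℝ) (hθcos : Real.cos θ = 1 / (2 * Real.sqrt 2))
    (hθmem : θ ∈ Set.Ioc (Real.pi / 3) (Real.pi / 2))
    (p : Fin 4 → ℝ) (hp : p 0 + p 1 + p 2 + p 3 = 1) :
    (∑ y, (p y : ℂ) • exF θ y).PosSemidef ↔
      0 ≤ -4 * p 0 ^ 2 - 4 * p 1 ^ 2 - 8 / 7 * p 2 ^ 2 - 8 / 7 * p 3 ^ 2 +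
        9 / 2 * p 0 * p 1 + 2 * p 0 * p 2 + 2 * p 0 * p 3 +
        2 * p 1 * p 2 + 2 * p 1 * p 3 + 9 / 7 * p 2 * p 3 := by
  have h2 : Real.sqrt 2 * Real.sqrt 2 = 2 := Real.mul_self_sqrt (by norm_num)
  have hc : Real.sqrt 2 * Real.cos θ = 1 / 2 := by
    rw [hθcos]; field_simp
  have hcC : ((Real.sqrt 2 : ℝ) : ℂ) * Complex.cos (θ : ℂ) = 1 / 2 := by
    rw [← Complex.ofReal_cos, ← Complex.ofReal_mul, hc]; norm_num
  have hA : ((Real.sqrt 2 : ℝ) : ℂ) * Complex.exp ((θ : ℂ) * Complex.I) =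
      1 / 2 + ((Real.sqrt 2 * Real.sin θ : ℝ) : ℂ) * Complex.I := by
    rw [Complex.exp_mul_I]
    push_cast
    linear_combination hcC
  have hB : ((Real.sqrt 2 : ℝ) : ℂ) * Complex.exp (-(θ : ℂ) * Complex.I) =
      1 / 2 - ((Real.sqrt 2 * Real.sin θ : ℝ) : ℂ) * Complex.I := by
    rw [Complex.exp_mul_I, Complex.cos_neg, Complex.sin_neg]
    push_cast
    linear_combination hcC
  push_cast [neg_mul] at hA hB
  have hF1 : F1 = !![(5 / 2 : ℂ), -(1 / 2); -(1 / 2), -(3 / 2)] := by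
    ext i j
    fin_cases i <;> fin_cases j <;>
      simp [F1, E1, E2, Matrix.one_apply] <;> norm_num
  have hF2 : F2 = !![(0 : ℂ), 2; 2, 1] := by
    ext i j
    fin_cases i <;> fin_cases j <;>
      simp [F2, E1, E2, Matrix.one_apply] <;> norm_num
  have hF3 : F3 θ = !![(0 : ℂ),
      -(6 / 7) * (((Real.sqrt 2 : ℝ) : ℂ) * Complex.exp (-(θ : ℂ) * Complex.I))
        - 1 / 7 * (((Real.sqrt 2 : ℝ) : ℂ) * Complex.exp ((θ : ℂ) * Complex.I));
      -(6 / 7) * (((Real.sqrt 2 : ℝ) : ℂ) * Complex.exp ((θ : ℂ) * Complex.I))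
        - 1 / 7 * (((Real.sqrt 2 : ℝ) : ℂ) * Complex.exp (-(θ : ℂ) * Complex.I)), 1] := by
    ext i j
    fin_cases i <;> fin_cases j <;>
      simp [F3, E3, E4, Matrix.one_apply] <;> ring
  have hF4 : F4 θ = !![(0 : ℂ),
      -(6 / 7) * (((Real.sqrt 2 : ℝ) : ℂ) * Complex.exp ((θ : ℂ) * Complex.I))
        - 1 / 7 * (((Real.sqrt 2 : ℝ) : ℂ) * Complex.exp (-(θ : ℂ) * Complex.I));
      -(6 / 7) * (((Real.sqrt 2 : ℝ) : ℂ) * Complex.exp (-(θ : ℂ) * Complex.I))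
        - 1 / 7 * (((Real.sqrt 2 : ℝ) : ℂ) * Complex.exp ((θ : ℂ) * Complex.I)), 1] := by
    ext i j
    fin_cases i <;> fin_cases j <;>
      simp [F4, E3, E4, Matrix.one_apply] <;> ring
  have hmat : (∑ y, (p y : ℂ) • exF θ y) =
      !![((5 / 2 * p 0 : ℝ) : ℂ),
          ⟨-(p 0) / 2 + 2 * p 1 - (p 2 + p 3) / 2, 5 * Real.sqrt 2 / 7 * Real.sin θ * (p 2 - p 3)⟩;
         ⟨-(p 0) / 2 + 2 * p 1 - (p 2 + p 3) / 2,
            -(5 * Real.sqrt 2 / 7 * Real.sin θ * (p 2 - p 3))⟩,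
          ((-3 / 2 * p 0 + p 1 + p 2 + p 3 : ℝ) : ℂ)] := by
    have hsum : (∑ y, (p y : ℂ) • exF θ y) =
        (p 0 : ℂ) • F1 + (p 1 : ℂ) • F2 + (p 2 : ℂ) • F3 θ + (p 3 : ℂ) • F4 θ := by
      rw [Fin.sum_univ_four]; rfl
    rw [hsum, hF1, hF2, hF3, hF4]
    ext i j
    fin_cases i <;> fin_cases j <;>
      simp [Complex.mk_eq_add_mul_I]
    · push_cast; ring
    · push_cast [neg_mul]
      linear_combination (-(6 * (p 2 : ℂ)) / 7 - (p 3 : ℂ) / 7) * hB +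
        (-(p 2 : ℂ) / 7 - 6 * (p 3 : ℂ) / 7) * hA
    · push_cast [neg_mul]
      linear_combination (-(p 2 : ℂ) / 7 - 6 * (p 3 : ℂ) / 7) * hB +
        (-(6 * (p 2 : ℂ)) / 7 - (p 3 : ℂ) / 7) * hA
    · push_cast; ring
  have htr : (5 / 2 * p 0 : ℝ) + (-3 / 2 * p 0 + p 1 + p 2 + p 3) = 1 := by linarith
  rw [hmat, keyPSD _ _ _ _ htr _ rfl]
  have hsin2 : Real.sin θ ^ 2 = 7 / 8 := by
    have h := Real.sin_sq_add_cos_sq θ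
    rw [hθcos] at h
    have hs2pos : (0 : ℝ) < Real.sqrt 2 := Real.sqrt_pos.mpr (by norm_num)
    field_simp at h
    nlinarith [h, h2]
  have heq : (5 / 2 * p 0 : ℝ) * (-3 / 2 * p 0 + p 1 + p 2 + p 3) -
      ((-(p 0) / 2 + 2 * p 1 - (p 2 + p 3) / 2) ^ 2 +
        (5 * Real.sqrt 2 / 7 * Real.sin θ * (p 2 - p 3)) ^ 2) =
      -4 * p 0 ^ 2 - 4 * p 1 ^ 2 - 8 / 7 * p 2 ^ 2 - 8 / 7 * p 3 ^ 2 +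
        9 / 2 * p 0 * p 1 + 2 * p 0 * p 2 + 2 * p 0 * p 3 +
        2 * p 1 * p 2 + 2 * p 1 * p 3 + 9 / 7 * p 2 * p 3 := by
    linear_combination (-(25 / 49) * (p 2 - p 3) ^ 2 * Real.sin θ ^ 2) * h2 +
      (-(50 / 49) * (p 2 - p 3) ^ 2) * hsin2
  rw [heq]
end
end
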